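/- arXiv:1112.5741 — 2 statements merged into one kernel-verified Lean document; each statement's English description precedes it below -/
import Mathlib

section
/- If f: {0,1}^n → {0,1} is ε-far from being t-symmetric, then for every set J ⊆ [n] with |J| ≥ t, SymInf_f(J) ≥ ε. -/
open Finset

variable {n : ℕ}

/-- `override J x y` is the vector equal to `y` on `J` and `x` elsewhere. -/
def override (J : Finset (Fin n)) (x y : Fin n → Bool) : Fin n → Bool :=
  fun i => if i ∈ J then y i else x i

/-- Influence of the set `J` in `f`. -/
noncomputable def Infl (f : (Fin n → Bool) → Bool) (J : Finset (Fin n)) : ℝ :=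
  ((Finset.univ.filter (fun p : (Fin n → Bool) × (Fin n → Bool) =>
      f p.1 ≠ f (override J p.1 p.2))).card : ℝ) / ((2 ^ n : ℝ) * (2 ^ n : ℝ))

/-- Normalized Hamming distance between Boolean functions. -/
noncomputable def hdist (f g : (Fin n → Bool) → Bool) : ℝ :=
  ((Finset.univ.filter (fun x => f x ≠ g x)).card : ℝ) / (2 ^ n : ℝ)

/-- `g` is a `k`-junta: it depends on at most `k` variables. -/
def IsJunta (k : ℕ) (g : (Fin n → Bool) → Bool) : Prop :=
  ∃ S : Finset (Fin n), S.card ≤ k ∧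
    ∀ x y : Fin n → Bool, (∀ i ∈ S, x i = y i) → g x = g y

/-- The permutations of `[n]` fixing every element outside `J`. -/
def permsOn (J : Finset (Fin n)) : Finset (Equiv.Perm (Fin n)) :=
  Finset.univ.filter (fun π => ∀ i ∉ J, π i = i)

/-- The action of a permutation on a vector: `(π • x)_{π(i)} = x_i`. -/
def permApply (π : Equiv.Perm (Fin n)) (x : Fin n → Bool) : Fin n → Bool :=
  fun j => x (π.symm j)

/-- Symmetric influence of the set `J` in `f`. -/
noncomputable def SymInf (f : (Fin n → Bool) → Bool) (J : Finset (Fin n)) : ℝ :=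
  (((Finset.univ ×ˢ permsOn J).filter (fun p : (Fin n → Bool) × Equiv.Perm (Fin n) =>
      f p.1 ≠ f (permApply p.2 p.1))).card : ℝ) /
    ((2 ^ n : ℝ) * ((permsOn J).card : ℝ))

/-- `f` is `J`-symmetric: invariant under permuting the coordinates in `J`. -/
def JSymmetric (f : (Fin n → Bool) → Bool) (J : Finset (Fin n)) : Prop :=
  ∀ x : Fin n → Bool, ∀ π ∈ permsOn J, f (permApply π x) = f x

/-- `f` is `t`-symmetric: it is `J`-symmetric for some `J` of size at least `t`. -/
def TSymmetric (t : ℕ) (f : (Fin n → Bool) → Bool) : Prop :=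
  ∃ J : Finset (Fin n), t ≤ J.card ∧ JSymmetric f J

/- ----------------- auxiliary material ----------------- -/

lemma permApply_mul (π σ : Equiv.Perm (Fin n)) (x : Fin n → Bool) :
    permApply (π * σ) x = permApply π (permApply σ x) := by
  funext j
  simp only [permApply, ← Equiv.Perm.inv_def, mul_inv_rev, Equiv.Perm.mul_apply]

lemma permApply_one (x : Fin n → Bool) : permApply (1 : Equiv.Perm (Fin n)) x = x := by
  funext j; simp [permApply]; rfl

lemma one_mem_permsOn (J : Finset (Fin n)) : (1 : Equiv.Perm (Fin n)) ∈ permsOn J := by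
  simp [permsOn]

lemma mul_mem_permsOn {J : Finset (Fin n)} {π σ : Equiv.Perm (Fin n)}
    (hπ : π ∈ permsOn J) (hσ : σ ∈ permsOn J) : π * σ ∈ permsOn J := by
  simp only [permsOn, mem_filter, mem_univ, true_and] at *
  intro i hi
  rw [Equiv.Perm.mul_apply, hσ i hi, hπ i hi]

lemma inv_mem_permsOn {J : Finset (Fin n)} {π : Equiv.Perm (Fin n)}
    (hπ : π ∈ permsOn J) : π⁻¹ ∈ permsOn J := by
  simp only [permsOn, mem_filter, mem_univ, true_and] at *
  intro i hi
  have h := hπ i hi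
  calc π⁻¹ i = π⁻¹ (π i) := by rw [h]
  _ = i := by simp

lemma card_filter_product {α β : Type*} (s : Finset α) (t : Finset β)
    (p : α → β → Prop) [∀ a b, Decidable (p a b)] :
    ((s ×ˢ t).filter (fun q => p q.1 q.2)).card = ∑ x ∈ s, (t.filter (p x)).card := by
  rw [Finset.card_filter, Finset.sum_product]
  exact Finset.sum_congr rfl fun x _ => (Finset.card_filter _ _).symm

/-- The orbit-majority function: the majority value of `f (π x)` over `π ∈ permsOn J`. -/
def maj (f : (Fin n → Bool) → Bool) (J : Finset (Fin n)) (x : Fin n → Bool) : Bool :=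
  decide ((permsOn J).card ≤
    2 * ((permsOn J).filter (fun π => f (permApply π x) = true)).card)

lemma maj_count_inv (f : (Fin n → Bool) → Bool) (J : Finset (Fin n))
    {σ : Equiv.Perm (Fin n)} (hσ : σ ∈ permsOn J) (x : Fin n → Bool) :
    ((permsOn J).filter (fun π => f (permApply π (permApply σ x)) = true)).card
      = ((permsOn J).filter (fun π => f (permApply π x) = true)).card := by
  refine Finset.card_bij' (fun π _ => π * σ) (fun τ _ => τ * σ⁻¹) ?hi ?hj ?li ?ri
  case hi =>
    intro π hπ
    simp only [mem_filter] at hπ ⊢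
    refine ⟨mul_mem_permsOn hπ.1 hσ, ?_⟩
    rw [permApply_mul]
    exact hπ.2
  case hj =>
    intro τ hτ
    simp only [mem_filter] at hτ ⊢
    refine ⟨mul_mem_permsOn hτ.1 (inv_mem_permsOn hσ), ?_⟩
    rw [permApply_mul, ← permApply_mul σ⁻¹ σ, inv_mul_cancel, permApply_one]
    exact hτ.2
  case li => intro π _; simp
  case ri => intro τ _; simp

lemma maj_jsymm (f : (Fin n → Bool) → Bool) (J : Finset (Fin n)) :
    JSymmetric (maj f J) J := by
  intro x π hπ
  unfold maj
  rw [maj_count_inv f J hπ x]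

lemma maj_half (f : (Fin n → Bool) → Bool) (J : Finset (Fin n)) (x : Fin n → Bool) :
    (permsOn J).card ≤
      2 * ((permsOn J).filter (fun π => f (permApply π x) = maj f J x)).card := by
  by_cases h : (permsOn J).card ≤
      2 * ((permsOn J).filter (fun π => f (permApply π x) = true)).card
  · have hm : maj f J x = true := by simp [maj, h]
    rw [hm]; exact h
  · have hm : maj f J x = false := by simp [maj, h]
    rw [hm]
    have hsum := Finset.card_filter_add_card_filter_not
      (s := permsOn J) (p := fun π => f (permApply π x) = true)
    have hfe : (permsOn J).filter (fun π => ¬ f (permApply π x) = true)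
        = (permsOn J).filter (fun π => f (permApply π x) = false) := by
      apply Finset.filter_congr
      intro π _
      simp
    rw [hfe] at hsum
    omega

/-- if `f` is `ε`-far from being `t`-symmetric, then every set of size
at least `t` has symmetric influence at least `ε`. -/
theorem symInf_ge_of_far_from_tSymmetric (n t : ℕ) (ε : ℝ)
    (f : (Fin n → Bool) → Bool)
    (hfar : ∀ g : (Fin n → Bool) → Bool, TSymmetric t g → ε ≤ hdist f g)
    (J : Finset (Fin n)) (hJ : t ≤ J.card) :
    ε ≤ SymInf f J := by
  classical
  set g := maj f J with hg
  have hGpos : 0 < (permsOn J).card := Finset.card_pos.2 ⟨1, one_mem_permsOn J⟩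
  have hsymm : JSymmetric g J := maj_jsymm f J
  have hε : ε ≤ hdist f g := hfar g ⟨J, hJ, hsymm⟩
  -- the three pair sets
  set S := (Finset.univ ×ˢ permsOn J).filter
    (fun p : (Fin n → Bool) × Equiv.Perm (Fin n) => f p.1 ≠ f (permApply p.2 p.1)) with hS
  set B := (Finset.univ ×ˢ permsOn J).filter
    (fun p : (Fin n → Bool) × Equiv.Perm (Fin n) =>
      f p.1 ≠ g p.1 ∧ f (permApply p.2 p.1) = g p.1) with hB
  set C := (Finset.univ ×ˢ permsOn J).filter
    (fun p : (Fin n → Bool) × Equiv.Perm (Fin n) =>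
      f p.1 = g p.1 ∧ f (permApply p.2 p.1) ≠ g p.1) with hC
  have hSBC : S = B ∪ C := by
    rw [hS, hB, hC, ← Finset.filter_or]
    apply Finset.filter_congr
    intro p _
    cases h1 : f p.1 <;> cases h2 : f (permApply p.2 p.1) <;> cases h3 : g p.1 <;> simp [h1, h2, h3]
  have hdisj : Disjoint B C := by
    rw [Finset.disjoint_filter]
    rintro p _ ⟨h1, _⟩ ⟨h2, _⟩
    exact h1 h2
  have hScard : S.card = B.card + C.card := by
    rw [hSBC, Finset.card_union_of_disjoint hdisj]
  have hCB : C.card = B.card := by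
    refine Finset.card_bij' (fun p _ => (permApply p.2 p.1, p.2⁻¹))
      (fun p _ => (permApply p.2 p.1, p.2⁻¹)) ?hi ?hj ?li ?ri
    case hi =>
      rintro ⟨x, π⟩ hp
      simp only [hC, hB, mem_filter, Finset.mem_product, mem_univ, true_and] at hp ⊢
      obtain ⟨hπ, hfx, hfπ⟩ := hp
      have hgπ : g (permApply π x) = g x := hsymm x π hπ
      have hxx : permApply π⁻¹ (permApply π x) = x := by
        rw [← permApply_mul, inv_mul_cancel, permApply_one]
      refine ⟨inv_mem_permsOn hπ, ?_, ?_⟩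
      · rw [hgπ]; exact hfπ
      · rw [hxx, hgπ]; exact hfx
    case hj =>
      rintro ⟨x, π⟩ hp
      simp only [hC, hB, mem_filter, Finset.mem_product, mem_univ, true_and] at hp ⊢
      obtain ⟨hπ, hfx, hfπ⟩ := hp
      have hgπ : g (permApply π x) = g x := hsymm x π hπ
      have hxx : permApply π⁻¹ (permApply π x) = x := by
        rw [← permApply_mul, inv_mul_cancel, permApply_one]
      refine ⟨inv_mem_permsOn hπ, ?_, ?_⟩
      · rw [hgπ]; exact hfπ
      · rw [hxx, hgπ]; exact hfx
    case li =>
      rintro ⟨x, π⟩ hp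
      simp only [hC, mem_filter] at hp
      have hxx : permApply π⁻¹ (permApply π x) = x := by
        rw [← permApply_mul, inv_mul_cancel, permApply_one]
      simp [hxx]
    case ri =>
      rintro ⟨x, π⟩ hp
      simp only [hB, mem_filter] at hp
      have hxx : permApply π⁻¹ (permApply π x) = x := by
        rw [← permApply_mul, inv_mul_cancel, permApply_one]
      simp [hxx]
  -- B.card as a sum over x
  have hBsum : B.card = ∑ x : Fin n → Bool,
      ((permsOn J).filter (fun π => f x ≠ g x ∧ f (permApply π x) = g x)).card := by
    rw [hB]
    exact card_filter_product Finset.univ (permsOn J)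
      (fun x π => f x ≠ g x ∧ f (permApply π x) = g x)
  -- key counting inequality
  set M := (Finset.univ.filter (fun x => f x ≠ g x)).card with hM
  have key : M * (permsOn J).card ≤ S.card := by
    have h2B : M * (permsOn J).card ≤ 2 * B.card := by
      rw [hBsum, Finset.mul_sum, hM, Finset.card_filter, Finset.sum_mul]
      apply Finset.sum_le_sum
      intro x _
      by_cases hx : f x ≠ g x
      · rw [if_pos hx, one_mul]
        have : (permsOn J).filter (fun π => f x ≠ g x ∧ f (permApply π x) = g x)
            = (permsOn J).filter (fun π => f (permApply π x) = g x) := by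
          apply Finset.filter_congr
          intro π _
          simp [hx]
        rw [this]
        exact maj_half f J x
      · rw [if_neg hx, zero_mul]
        exact Nat.zero_le _
    omega
  -- conclude in ℝ
  have hεM : ε ≤ (M : ℝ) / (2 ^ n : ℝ) := hε
  have h2n : (0 : ℝ) < (2 ^ n : ℝ) := by positivity
  have hGr : (0 : ℝ) < ((permsOn J).card : ℝ) := by exact_mod_cast hGpos
  refine le_trans hεM ?_
  rw [SymInf, ← hS]
  rw [div_le_div_iff₀ h2n (by positivity)]
  have : (M : ℝ) * ((permsOn J).card : ℝ) ≤ (S.card : ℝ) := by exact_mod_cast key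
  nlinarith [this, h2n.le]
end

section
/- Let J, K ⊆ [n], let π be uniform over S_{J∪K}, and let π_J, π_K be independent and uniform over S_J, S_K respectively. For any fixed x ∈ {0,1}^n, the total variation distance between the distribution of πx and the distribution of π_J(π_K x) equals the total variation distance between the hypergeometric distributions H(|J∪K|, |x_{J∪K}|, |K\J|) and H(|K|, |x_K|, |K\J|). -/
open Finset

variable {n : ℕ}

/-- Hamming weight of `x` restricted to the set `A`. -/
def wOn {n : ℕ} (x : Fin n → Bool) (A : Finset (Fin n)) : ℕ :=
  (A.filter (fun i => x i = true)).card

/-- The hypergeometric pmf: probability of `i` red balls when drawing `k` balls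
without replacement from `N` balls, `M` of which are red. -/
noncomputable def hypPMF (N M k i : ℕ) : ℝ :=
  ((M.choose i : ℝ) * ((N - M).choose (k - i) : ℝ)) / (N.choose k : ℝ)

/-- The distribution of `πx` for `π` uniform over `S_{J∪K}`. -/
noncomputable def distOne {n : ℕ} (J K : Finset (Fin n)) (x y : Fin n → Bool) : ℝ :=
  (((permsOn (J ∪ K)).filter (fun π => permApply π x = y)).card : ℝ) /
    ((permsOn (J ∪ K)).card : ℝ)

/-- The distribution of `π_J (π_K x)` for independent uniform `π_J ∈ S_J`, `π_K ∈ S_K`. -/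
noncomputable def distTwo {n : ℕ} (J K : Finset (Fin n)) (x y : Fin n → Bool) : ℝ :=
  (((permsOn J ×ˢ permsOn K).filter
      (fun p : Equiv.Perm (Fin n) × Equiv.Perm (Fin n) =>
        permApply p.1 (permApply p.2 x) = y)).card : ℝ) /
    (((permsOn J).card : ℝ) * ((permsOn K).card : ℝ))

lemma mem_permsOn {A : Finset (Fin n)} {π : Equiv.Perm (Fin n)} :
    π ∈ permsOn A ↔ ∀ i ∉ A, π i = i := by
  simp [permsOn]

lemma permsOn_symm {A : Finset (Fin n)} {π : Equiv.Perm (Fin n)} (h : π ∈ permsOn A) :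
    π.symm ∈ permsOn A := by
  rw [mem_permsOn] at h ⊢
  intro i hi
  have := h i hi
  exact π.injective (by rw [Equiv.apply_symm_apply, this])

lemma permsOn_maps {A : Finset (Fin n)} {π : Equiv.Perm (Fin n)} (h : π ∈ permsOn A)
    {i : Fin n} (hi : i ∈ A) : π i ∈ A := by
  by_contra hni
  have h2 := (mem_permsOn.1 h) (π i) hni
  exact hni (by rw [π.injective h2]; exact hi)

lemma permsOn_mono {A B : Finset (Fin n)} (hAB : A ⊆ B) : permsOn A ⊆ permsOn B := by
  intro π h
  rw [mem_permsOn] at h ⊢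
  exact fun i hi => h i (fun hA => hi (hAB hA))

lemma permApply_eq_of_not_mem {A : Finset (Fin n)} {π : Equiv.Perm (Fin n)}
    (h : π ∈ permsOn A) {x : Fin n → Bool} {i : Fin n} (hi : i ∉ A) :
    permApply π x i = x i := by
  unfold permApply
  rw [mem_permsOn.1 (permsOn_symm h) i hi]

lemma wOn_permApply {A : Finset (Fin n)} {π : Equiv.Perm (Fin n)} (h : π ∈ permsOn A)
    (x : Fin n → Bool) : wOn (permApply π x) A = wOn x A := by
  unfold wOn
  apply Finset.card_nbij' (fun j => π.symm j) (fun i => π i)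
  · intro j hj
    simp only [mem_filter, mem_coe] at hj ⊢
    exact ⟨permsOn_maps (permsOn_symm h) hj.1, hj.2⟩
  · intro i hi
    simp only [mem_filter, mem_coe] at hi ⊢
    refine ⟨permsOn_maps h hi.1, ?_⟩
    show x (π.symm (π i)) = true
    rw [Equiv.symm_apply_apply]; exact hi.2
  · intro j _; simp
  · intro i _; simp

lemma wOn_union {x : Fin n → Bool} {A B : Finset (Fin n)} (h : Disjoint A B) :
    wOn x (A ∪ B) = wOn x A + wOn x B := by
  unfold wOn
  rw [Finset.filter_union]
  exact Finset.card_union_of_disjoint (Finset.disjoint_filter_filter h)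

lemma wOn_congr {x y : Fin n → Bool} {A : Finset (Fin n)} (h : ∀ i ∈ A, x i = y i) :
    wOn x A = wOn y A := by
  unfold wOn
  congr 1
  exact Finset.filter_congr (fun i hi => by rw [h i hi])

lemma wOn_le_card {x : Fin n → Bool} {A : Finset (Fin n)} : wOn x A ≤ A.card :=
  Finset.card_filter_le _ _

lemma wOn_mono {x : Fin n → Bool} {A B : Finset (Fin n)} (h : A ⊆ B) : wOn x A ≤ wOn x B :=
  Finset.card_le_card (Finset.filter_subset_filter _ h)

lemma subtypeCongr_pos {α : Type*} {p q : α → Prop} [DecidablePred p] [DecidablePred q]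
    (e : { i // p i } ≃ { i // q i }) (f : { i // ¬p i } ≃ { i // ¬q i })
    {a : α} (h : p a) : Equiv.subtypeCongr e f a = e ⟨a, h⟩ := by
  simp [Equiv.subtypeCongr, h]

lemma subtypeCongr_neg {α : Type*} {p q : α → Prop} [DecidablePred p] [DecidablePred q]
    (e : { i // p i } ≃ { i // q i }) (f : { i // ¬p i } ≃ { i // ¬q i })
    {a : α} (h : ¬ p a) : Equiv.subtypeCongr e f a = f ⟨a, h⟩ := by
  simp [Equiv.subtypeCongr, h]

lemma permApply_eq_iff {π : Equiv.Perm (Fin n)} {x y : Fin n → Bool} :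
    permApply π x = y ↔ ∀ i, y (π i) = x i := by
  constructor
  · intro h i
    rw [← h]
    show x (π.symm (π i)) = x i
    rw [Equiv.symm_apply_apply]
  · intro h
    funext j
    show x (π.symm j) = y j
    rw [← h (π.symm j), Equiv.apply_symm_apply]

/-- Restrict a permutation to an equivalence between subtypes. -/
def restrictPerm {P Q : Fin n → Prop} (π : Equiv.Perm (Fin n))
    (h1 : ∀ i, P i → Q (π i)) (h2 : ∀ i, Q i → P (π.symm i)) :
    {i // P i} ≃ {i // Q i} where
  toFun a := ⟨π a, h1 _ a.2⟩
  invFun b := ⟨π.symm b, h2 _ b.2⟩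
  left_inv a := by ext; simp
  right_inv b := by ext; simp

/-- Glue two subtype equivalences and identity outside `A` to a permutation. -/
def buildPerm (A : Finset (Fin n)) (x y : Fin n → Bool)
    (e₁ : {i : Fin n // i ∈ A ∧ x i = true} ≃ {i : Fin n // i ∈ A ∧ y i = true})
    (e₂ : {i : Fin n // i ∈ A ∧ ¬ x i = true} ≃ {i : Fin n // i ∈ A ∧ ¬ y i = true}) :
    Equiv.Perm (Fin n) where
  toFun i :=
    if h : i ∈ A ∧ x i = true then (e₁ ⟨i, h⟩ : {i : Fin n // i ∈ A ∧ y i = true}).1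
    else if h2 : i ∈ A then (e₂ ⟨i, h2, fun hx => h ⟨h2, hx⟩⟩).1 else i
  invFun j :=
    if h : j ∈ A ∧ y j = true then (e₁.symm ⟨j, h⟩).1
    else if h2 : j ∈ A then (e₂.symm ⟨j, h2, fun hy => h ⟨h2, hy⟩⟩).1 else j
  left_inv i := by
    dsimp only
    by_cases h : i ∈ A ∧ x i = true
    · rw [dif_pos h, dif_pos (e₁ ⟨i, h⟩).2]
      simp
    · by_cases h2 : i ∈ A
      · rw [dif_neg h, dif_pos h2,
          dif_neg (fun hc => (e₂ ⟨i, h2, fun hx => h ⟨h2, hx⟩⟩).2.2 hc.2),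
          dif_pos (e₂ ⟨i, h2, fun hx => h ⟨h2, hx⟩⟩).2.1]
        have : (⟨(e₂ ⟨i, h2, fun hx => h ⟨h2, hx⟩⟩).1, (e₂ _).2.1, fun hy => (e₂ _).2.2 hy⟩ :
            {i : Fin n // i ∈ A ∧ ¬ y i = true}) = e₂ ⟨i, h2, fun hx => h ⟨h2, hx⟩⟩ := rfl
        rw [this]
        simp
      · rw [dif_neg h, dif_neg h2, dif_neg (fun hc => h2 hc.1), dif_neg h2]
  right_inv j := by
    dsimp only
    by_cases h : j ∈ A ∧ y j = true
    · rw [dif_pos h, dif_pos (e₁.symm ⟨j, h⟩).2]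
      simp
    · by_cases h2 : j ∈ A
      · rw [dif_neg h, dif_pos h2,
          dif_neg (fun hc => (e₂.symm ⟨j, h2, fun hy => h ⟨h2, hy⟩⟩).2.2 hc.2),
          dif_pos (e₂.symm ⟨j, h2, fun hy => h ⟨h2, hy⟩⟩).2.1]
        have : (⟨(e₂.symm ⟨j, h2, fun hy => h ⟨h2, hy⟩⟩).1, (e₂.symm _).2.1,
            fun hx => (e₂.symm _).2.2 hx⟩ :
            {i : Fin n // i ∈ A ∧ ¬ x i = true}) = e₂.symm ⟨j, h2, fun hy => h ⟨h2, hy⟩⟩ := rfl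
        rw [this]
        simp
      · rw [dif_neg h, dif_neg h2, dif_neg (fun hc => h2 hc.1), dif_neg h2]

lemma buildPerm_mem (A : Finset (Fin n)) (x y : Fin n → Bool) (e₁) (e₂) :
    buildPerm A x y e₁ e₂ ∈ permsOn A := by
  rw [mem_permsOn]
  intro i hi
  show (if h : i ∈ A ∧ x i = true then _ else if h2 : i ∈ A then _ else i) = i
  rw [dif_neg (fun hc => hi hc.1), dif_neg hi]

lemma buildPerm_apply_pos (A : Finset (Fin n)) (x y : Fin n → Bool) (e₁) (e₂)
    {i : Fin n} (h : i ∈ A ∧ x i = true) :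
    buildPerm A x y e₁ e₂ i = (e₁ ⟨i, h⟩).1 := by
  show (if h : i ∈ A ∧ x i = true then _ else _) = _
  rw [dif_pos h]

lemma buildPerm_apply_neg (A : Finset (Fin n)) (x y : Fin n → Bool) (e₁) (e₂)
    {i : Fin n} (h2 : i ∈ A) (h : ¬ x i = true) :
    buildPerm A x y e₁ e₂ i = (e₂ ⟨i, h2, h⟩).1 := by
  show (if hc : i ∈ A ∧ x i = true then _ else if h2 : i ∈ A then _ else i) = _
  rw [dif_neg (fun hc => h hc.2), dif_pos h2]

lemma buildPerm_apply_out (A : Finset (Fin n)) (x y : Fin n → Bool) (e₁) (e₂)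
    {i : Fin n} (h2 : i ∉ A) :
    buildPerm A x y e₁ e₂ i = i := mem_permsOn.1 (buildPerm_mem A x y e₁ e₂) i h2

lemma buildPerm_permApply (A : Finset (Fin n)) (x y : Fin n → Bool) (e₁) (e₂)
    (hout : ∀ i ∉ A, y i = x i) :
    permApply (buildPerm A x y e₁ e₂) x = y := by
  rw [permApply_eq_iff]
  intro i
  by_cases h : i ∈ A ∧ x i = true
  · rw [buildPerm_apply_pos A x y e₁ e₂ h, (e₁ ⟨i, h⟩).2.2, h.2]
  · by_cases h2 : i ∈ A
    · have hx : ¬ x i = true := fun hc => h ⟨h2, hc⟩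
      rw [buildPerm_apply_neg A x y e₁ e₂ h2 hx]
      have := (e₂ ⟨i, h2, hx⟩).2.2
      rw [Bool.not_eq_true] at this hx
      rw [this, hx]
    · rw [buildPerm_apply_out A x y e₁ e₂ h2]
      exact hout i h2

/-- The key bijection for counting permutations mapping `x` to `y`. -/
def countEquiv (A : Finset (Fin n)) (x y : Fin n → Bool) (hout : ∀ i ∉ A, y i = x i) :
    {π : Equiv.Perm (Fin n) // π ∈ (permsOn A).filter (fun π => permApply π x = y)} ≃
    (({i : Fin n // i ∈ A ∧ x i = true} ≃ {i : Fin n // i ∈ A ∧ y i = true}) ×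
     ({i : Fin n // i ∈ A ∧ ¬ x i = true} ≃ {i : Fin n // i ∈ A ∧ ¬ y i = true})) where
  toFun := fun p =>
    (restrictPerm p.1
        (fun i hi => ⟨permsOn_maps (Finset.mem_filter.1 p.2).1 hi.1, by
          rw [permApply_eq_iff.1 (Finset.mem_filter.1 p.2).2 i]; exact hi.2⟩)
        (fun j hj => ⟨permsOn_maps (permsOn_symm (Finset.mem_filter.1 p.2).1) hj.1, by
          have := permApply_eq_iff.1 (Finset.mem_filter.1 p.2).2 (p.1.symm j)
          rw [Equiv.apply_symm_apply] at this
          rw [← this]; exact hj.2⟩),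
     restrictPerm p.1
        (fun i hi => ⟨permsOn_maps (Finset.mem_filter.1 p.2).1 hi.1, by
          rw [permApply_eq_iff.1 (Finset.mem_filter.1 p.2).2 i]; exact hi.2⟩)
        (fun j hj => ⟨permsOn_maps (permsOn_symm (Finset.mem_filter.1 p.2).1) hj.1, by
          have := permApply_eq_iff.1 (Finset.mem_filter.1 p.2).2 (p.1.symm j)
          rw [Equiv.apply_symm_apply] at this
          rw [← this]; exact hj.2⟩))
  invFun := fun q => ⟨buildPerm A x y q.1 q.2, Finset.mem_filter.2
    ⟨buildPerm_mem A x y q.1 q.2, buildPerm_permApply A x y q.1 q.2 hout⟩⟩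
  left_inv := fun p => by
    apply Subtype.ext
    apply Equiv.ext
    intro i
    by_cases h : i ∈ A ∧ x i = true
    · rw [buildPerm_apply_pos A x y _ _ h]; rfl
    · by_cases h2 : i ∈ A
      · rw [buildPerm_apply_neg A x y _ _ h2 (fun hc => h ⟨h2, hc⟩)]; rfl
      · rw [buildPerm_apply_out A x y _ _ h2]
        exact (mem_permsOn.1 (Finset.mem_filter.1 p.2).1 i h2).symm
  right_inv := fun q => by
    apply Prod.ext
    · apply Equiv.ext
      intro i
      apply Subtype.ext
      show (buildPerm A x y q.1 q.2) i.1 = (q.1 i).1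
      rw [buildPerm_apply_pos A x y _ _ i.2]
    · apply Equiv.ext
      intro i
      apply Subtype.ext
      show (buildPerm A x y q.1 q.2) i.1 = (q.2 i).1
      rw [buildPerm_apply_neg A x y _ _ i.2.1 i.2.2]

lemma card_subtype_true (A : Finset (Fin n)) (x : Fin n → Bool) :
    Fintype.card {i : Fin n // i ∈ A ∧ x i = true} = wOn x A := by
  rw [Fintype.card_subtype]
  unfold wOn
  congr 1
  ext i
  simp [and_comm]

lemma card_subtype_false (A : Finset (Fin n)) (x : Fin n → Bool) :
    Fintype.card {i : Fin n // i ∈ A ∧ ¬ x i = true} = A.card - wOn x A := by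
  rw [Fintype.card_subtype]
  have h1 : Finset.univ.filter (fun i : Fin n => i ∈ A ∧ ¬ x i = true) =
      A.filter (fun i => ¬ x i = true) := by
    ext i; simp [and_comm]
  rw [h1]
  have := Finset.card_filter_add_card_filter_not (s := A)
    (p := fun i => x i = true)
  unfold wOn
  omega

lemma card_permsOn_filter (A : Finset (Fin n)) (x y : Fin n → Bool)
    (hout : ∀ i ∉ A, y i = x i) (hw : wOn y A = wOn x A) :
    ((permsOn A).filter (fun π => permApply π x = y)).card =
      (wOn x A).factorial * (A.card - wOn x A).factorial := by
  rw [← Fintype.card_coe]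
  rw [Fintype.card_congr (countEquiv A x y hout)]
  rw [Fintype.card_prod]
  have e1 : Nonempty ({i : Fin n // i ∈ A ∧ x i = true} ≃ {i : Fin n // i ∈ A ∧ y i = true}) := by
    apply Fintype.card_eq.1
    rw [card_subtype_true, card_subtype_true, hw]
  have e2 : Nonempty ({i : Fin n // i ∈ A ∧ ¬ x i = true} ≃ {i : Fin n // i ∈ A ∧ ¬ y i = true}) := by
    apply Fintype.card_eq.1
    rw [card_subtype_false, card_subtype_false, hw]
  rw [Fintype.card_equiv e1.some, Fintype.card_equiv e2.some,
    card_subtype_true, card_subtype_false]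

lemma card_permsOn_filter_eq (A : Finset (Fin n)) (x y : Fin n → Bool) :
    ((permsOn A).filter (fun π => permApply π x = y)).card =
      if (∀ i ∉ A, y i = x i) ∧ wOn y A = wOn x A
      then (wOn x A).factorial * (A.card - wOn x A).factorial else 0 := by
  split_ifs with h
  · exact card_permsOn_filter A x y h.1 h.2
  · rw [Finset.card_eq_zero, Finset.filter_eq_empty_iff]
    intro π hπ hc
    apply h
    constructor
    · intro i hi
      rw [← hc]
      exact (permApply_eq_of_not_mem hπ hi)
    · rw [← hc, wOn_permApply hπ]

lemma card_permsOn (A : Finset (Fin n)) : (permsOn A).card = (A.card).factorial := by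
  rw [← Fintype.card_coe]
  have e : {π : Equiv.Perm (Fin n) // π ∈ permsOn A} ≃ Equiv.Perm {i : Fin n // i ∈ A} := by
    refine Equiv.trans ?_ (Equiv.Perm.subtypeEquivSubtypePerm (fun i => i ∈ A)).symm
    apply Equiv.subtypeEquiv (Equiv.refl _)
    intro π
    simp [mem_permsOn]
  rw [Fintype.card_congr e, Fintype.card_perm, Fintype.card_coe]

lemma count_vec (B₁ B₂ : Finset (Fin n)) (hd : Disjoint B₁ B₂) (u : Fin n → Bool) (a b : ℕ) :
    (Finset.univ.filter (fun z : Fin n → Bool =>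
        (∀ i ∉ B₁ ∪ B₂, z i = u i) ∧ wOn z B₁ = a ∧ wOn z B₂ = b)).card
      = B₁.card.choose a * B₂.card.choose b := by
  rw [← Finset.card_powersetCard, ← Finset.card_powersetCard, ← Finset.card_product]
  apply Finset.card_nbij' (fun z => (B₁.filter (fun i => z i = true), B₂.filter (fun i => z i = true)))
    (fun S => (fun i => if i ∈ B₁ then decide (i ∈ S.1) else if i ∈ B₂ then decide (i ∈ S.2) else u i))
  · intro z hz
    simp only [Finset.mem_coe, Finset.mem_filter, Finset.mem_univ, true_and] at hz
    simp only [Finset.mem_coe, Finset.mem_product, Finset.mem_powersetCard]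
    exact ⟨⟨Finset.filter_subset _ _, hz.2.1⟩, ⟨Finset.filter_subset _ _, hz.2.2⟩⟩
  · intro S hS
    simp only [Finset.mem_coe, Finset.mem_product, Finset.mem_powersetCard] at hS
    simp only [Finset.mem_coe, Finset.mem_filter, Finset.mem_univ, true_and]
    refine ⟨?_, ?_, ?_⟩
    · intro i hi
      rw [Finset.mem_union] at hi
      push_neg at hi
      simp [if_neg hi.1, if_neg hi.2]
    · unfold wOn
      rw [← hS.1.2]
      congr 1
      ext i
      simp only [Finset.mem_filter]
      constructor
      · rintro ⟨hiB, hv⟩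
        rw [if_pos hiB] at hv
        simpa using hv
      · intro hiS
        exact ⟨hS.1.1 hiS, by rw [if_pos (hS.1.1 hiS)]; simpa using hiS⟩
    · unfold wOn
      rw [← hS.2.2]
      congr 1
      ext i
      simp only [Finset.mem_filter]
      constructor
      · rintro ⟨hiB, hv⟩
        have hnB1 : i ∉ B₁ := fun hc => (Finset.disjoint_left.1 hd hc) hiB
        rw [if_neg hnB1, if_pos hiB] at hv
        simpa using hv
      · intro hiS
        have hiB := hS.2.1 hiS
        have hnB1 : i ∉ B₁ := fun hc => (Finset.disjoint_left.1 hd hc) hiB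
        exact ⟨hiB, by rw [if_neg hnB1, if_pos hiB]; simpa using hiS⟩
  · intro z hz
    simp only [Finset.mem_coe, Finset.mem_filter, Finset.mem_univ, true_and] at hz
    funext i
    dsimp only
    by_cases h1 : i ∈ B₁
    · rw [if_pos h1]
      by_cases hzi : z i = true
      · simp [Finset.mem_filter, h1, hzi]
      · simp only [Finset.mem_filter, h1, true_and]
        rw [Bool.not_eq_true] at hzi
        simp [hzi]
    · rw [if_neg h1]
      by_cases h2 : i ∈ B₂
      · rw [if_pos h2]
        by_cases hzi : z i = true
        · simp [Finset.mem_filter, h2, hzi]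
        · simp only [Finset.mem_filter, h2, true_and]
          rw [Bool.not_eq_true] at hzi
          simp [hzi]
      · rw [if_neg h2]
        exact (hz.1 i (by simp [h1, h2])).symm
  · intro S hS
    simp only [Finset.mem_coe, Finset.mem_product, Finset.mem_powersetCard] at hS
    have e1 : B₁.filter (fun i => (if i ∈ B₁ then decide (i ∈ S.1) else if i ∈ B₂ then decide (i ∈ S.2) else u i) = true) = S.1 := by
      ext i
      simp only [Finset.mem_filter]
      constructor
      · rintro ⟨hiB, hv⟩
        rw [if_pos hiB] at hv
        simpa using hv
      · intro hi
        exact ⟨hS.1.1 hi, by rw [if_pos (hS.1.1 hi)]; simpa using hi⟩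
    have e2 : B₂.filter (fun i => (if i ∈ B₁ then decide (i ∈ S.1) else if i ∈ B₂ then decide (i ∈ S.2) else u i) = true) = S.2 := by
      ext i
      simp only [Finset.mem_filter]
      constructor
      · rintro ⟨hiB, hv⟩
        rw [if_neg (fun hc => (Finset.disjoint_left.1 hd hc) hiB), if_pos hiB] at hv
        simpa using hv
      · intro hi
        have hiB := hS.2.1 hi
        exact ⟨hiB, by rw [if_neg (fun hc => (Finset.disjoint_left.1 hd hc) hiB), if_pos hiB]; simpa using hi⟩
    exact Prod.ext e1 e2

lemma wOn_empty (x : Fin n → Bool) : wOn x ∅ = 0 := by simp [wOn]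

lemma wOn_split (x : Fin n → Bool) (J K : Finset (Fin n)) :
    wOn x (J ∪ K) = wOn x J + wOn x (K \ J) := by
  rw [← wOn_union disjoint_sdiff, Finset.union_sdiff_self_eq_union]

lemma wOn_splitK (x : Fin n → Bool) (J K : Finset (Fin n)) :
    wOn x K = wOn x (K \ J) + wOn x (K ∩ J) := by
  rw [← wOn_union (disjoint_sdiff_inter K J), Finset.sdiff_union_inter]

lemma wOn_splitJK (x : Fin n → Bool) (J K : Finset (Fin n)) :
    wOn x (J ∪ K) = wOn x (J \ K) + wOn x K := by
  rw [← wOn_union sdiff_disjoint, Finset.sdiff_union_self_eq_union]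

lemma countY (J K : Finset (Fin n)) (x : Fin n → Bool) (a : ℕ) :
    (Finset.univ.filter (fun y : Fin n → Bool =>
        ((∀ i ∉ J ∪ K, y i = x i) ∧ wOn y (J ∪ K) = wOn x (J ∪ K)) ∧ wOn y (K \ J) = a)).card
    = if a ≤ wOn x (J ∪ K) then
        ((K \ J).card.choose a) * (J.card.choose (wOn x (J ∪ K) - a)) else 0 := by
  set w := wOn x (J ∪ K) with hw
  split_ifs with ha
  · rw [← count_vec (K \ J) J (disjoint_sdiff_self_left) x a (w - a)]
    congr 1
    ext y
    simp only [Finset.mem_filter, Finset.mem_univ, true_and]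
    have hu : K \ J ∪ J = J ∪ K := by
      rw [Finset.union_comm, Finset.union_sdiff_self_eq_union]
    constructor
    · rintro ⟨⟨h1, h2⟩, h3⟩
      refine ⟨by rw [hu]; exact h1, h3, ?_⟩
      have := wOn_split y J K
      omega
    · rintro ⟨h1, h2, h3⟩
      have hyw : wOn y (J ∪ K) = w := by
        have := wOn_split y J K
        omega
      exact ⟨⟨by rw [← hu]; exact h1, hyw⟩, h2⟩
  · rw [Finset.card_eq_zero, Finset.filter_eq_empty_iff]
    rintro y _ ⟨⟨h1, h2⟩, h3⟩
    apply ha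
    rw [← h2, ← h3]
    exact wOn_mono (Finset.sdiff_subset.trans Finset.subset_union_right)

lemma countZ (J K : Finset (Fin n)) (x y : Fin n → Bool)
    (hout : ∀ i ∉ J ∪ K, y i = x i) (hw : wOn y (J ∪ K) = wOn x (J ∪ K)) :
    (Finset.univ.filter (fun z : Fin n → Bool =>
        ((∀ i ∉ K, z i = x i) ∧ wOn z K = wOn x K) ∧ (∀ i ∉ J, y i = z i) ∧ wOn y J = wOn z J)).card
    = if wOn y (K \ J) ≤ wOn x K then
        ((J ∩ K).card.choose (wOn x K - wOn y (K \ J))) else 0 := by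
  set m := wOn x K with hm
  set a := wOn y (K \ J) with hadef
  clear_value m a
  split_ifs with ha
  · have hcv := count_vec (J ∩ K) ∅ (Finset.disjoint_empty_right _)
      (fun i => if i ∈ J then x i else y i) (m - a) 0
    simp only [Finset.card_empty, Nat.choose_zero_right, Nat.choose_self, mul_one,
      Finset.union_empty, Finset.notMem_empty] at hcv
    rw [← hcv]
    congr 1
    ext z
    simp only [Finset.mem_filter, Finset.mem_univ, true_and]
    constructor
    · rintro ⟨⟨h1, h2⟩, h3, h4⟩
      have hKJ : wOn z (K \ J) = a := by
        rw [hadef]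
        exact wOn_congr (fun i hi => (h3 i (Finset.mem_sdiff.1 hi).2).symm)
      have hsplit := wOn_splitK z J K
      have hic : wOn z (K ∩ J) = wOn z (J ∩ K) := by rw [Finset.inter_comm]
      refine ⟨?_, ?_, wOn_empty z⟩
      · intro i hi
        by_cases hiJ : i ∈ J
        · have hiK : i ∉ K := fun hc => hi (Finset.mem_inter.2 ⟨hiJ, hc⟩)
          rw [if_pos hiJ]
          exact h1 i hiK
        · rw [if_neg hiJ]
          exact (h3 i hiJ).symm
      · clear hcv
        omega
    · rintro ⟨h1, h2, _⟩
      have hzKJ : wOn z (K \ J) = a := by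
        rw [hadef]
        apply wOn_congr
        intro i hi
        have hiJ : i ∉ J := (Finset.mem_sdiff.1 hi).2
        rw [h1 i (fun hc => hiJ (Finset.mem_inter.1 hc).1), if_neg hiJ]
      have hzJK : wOn z (J \ K) = wOn x (J \ K) := by
        apply wOn_congr
        intro i hi
        obtain ⟨hiJ, hiK⟩ := Finset.mem_sdiff.1 hi
        rw [h1 i (fun hc => hiK (Finset.mem_inter.1 hc).2), if_pos hiJ]
      have hic : wOn z (K ∩ J) = wOn z (J ∩ K) := by rw [Finset.inter_comm]
      have hsK := wOn_splitK z J K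
      have hsJy := wOn_split y J K
      have hsJx := wOn_splitJK x J K
      have hsJz : wOn z J = wOn z (J \ K) + wOn z (J ∩ K) := by
        rw [← wOn_union (disjoint_sdiff_inter J K), Finset.sdiff_union_inter]
      refine ⟨⟨?_, by clear hcv; omega⟩, ?_, by clear hcv; omega⟩
      · intro i hiK
        by_cases hiJ : i ∈ J
        · rw [h1 i (fun hc => hiK (Finset.mem_inter.1 hc).2), if_pos hiJ]
        · rw [h1 i (fun hc => hiK (Finset.mem_inter.1 hc).2), if_neg hiJ]
          exact hout i (by simp [hiJ, hiK])
      · intro i hiJ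
        rw [h1 i (fun hc => hiJ (Finset.mem_inter.1 hc).1), if_neg hiJ]
  · rw [Finset.card_eq_zero, Finset.filter_eq_empty_iff]
    rintro z _ ⟨⟨h1, h2⟩, h3, h4⟩
    apply ha
    have hKJ : wOn z (K \ J) = a := by
      rw [hadef]
      exact wOn_congr (fun i hi => (h3 i (Finset.mem_sdiff.1 hi).2).symm)
    have := wOn_mono (x := z) (Finset.sdiff_subset (s := K) (t := J))
    omega

lemma distTwo_card (J K : Finset (Fin n)) (x y : Fin n → Bool) :
    ((permsOn J ×ˢ permsOn K).filter
      (fun p : Equiv.Perm (Fin n) × Equiv.Perm (Fin n) =>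
        permApply p.1 (permApply p.2 x) = y)).card
    = ∑ z : Fin n → Bool,
        ((permsOn K).filter (fun τ => permApply τ x = z)).card *
        ((permsOn J).filter (fun σ => permApply σ z = y)).card := by
  rw [Finset.card_filter, Finset.sum_product_right]
  have step1 : ∀ τ : Equiv.Perm (Fin n),
      (∑ σ ∈ permsOn J, if permApply σ (permApply τ x) = y then 1 else 0)
      = ((permsOn J).filter (fun σ => permApply σ (permApply τ x) = y)).card := by
    intro τ
    rw [Finset.card_filter]
  calc ∑ τ ∈ permsOn K, ∑ σ ∈ permsOn J,
        (if permApply σ (permApply τ x) = y then 1 else 0)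
      = ∑ τ ∈ permsOn K,
          ((permsOn J).filter (fun σ => permApply σ (permApply τ x) = y)).card := by
        exact Finset.sum_congr rfl (fun τ _ => step1 τ)
    _ = ∑ τ ∈ permsOn K, ∑ z : Fin n → Bool, (if permApply τ x = z then
          ((permsOn J).filter (fun σ => permApply σ z = y)).card else 0) := by
        apply Finset.sum_congr rfl
        intro τ _
        rw [Finset.sum_ite_eq (Finset.univ) (permApply τ x)
          (fun z => ((permsOn J).filter (fun σ => permApply σ z = y)).card)]
        simp
    _ = ∑ z : Fin n → Bool, ∑ τ ∈ permsOn K, (if permApply τ x = z then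
          ((permsOn J).filter (fun σ => permApply σ z = y)).card else 0) := Finset.sum_comm
    _ = ∑ z : Fin n → Bool,
        ((permsOn K).filter (fun τ => permApply τ x = z)).card *
        ((permsOn J).filter (fun σ => permApply σ z = y)).card := by
        apply Finset.sum_congr rfl
        intro z _
        rw [Finset.sum_ite, Finset.sum_const, Finset.sum_const]
        simp [mul_comm]

lemma distTwo_num (J K : Finset (Fin n)) (x y : Fin n → Bool)
    (hout : ∀ i ∉ J ∪ K, y i = x i) (hw : wOn y (J ∪ K) = wOn x (J ∪ K)) :
    ((permsOn J ×ˢ permsOn K).filter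
      (fun p : Equiv.Perm (Fin n) × Equiv.Perm (Fin n) =>
        permApply p.1 (permApply p.2 x) = y)).card
    = (if wOn y (K \ J) ≤ wOn x K then
        (J ∩ K).card.choose (wOn x K - wOn y (K \ J)) else 0) *
      ((wOn x K).factorial * (K.card - wOn x K).factorial *
        ((wOn y J).factorial * (J.card - wOn y J).factorial)) := by
  rw [distTwo_card]
  have hterm : ∀ z : Fin n → Bool,
      ((permsOn K).filter (fun τ => permApply τ x = z)).card *
      ((permsOn J).filter (fun σ => permApply σ z = y)).card
      = if ((∀ i ∉ K, z i = x i) ∧ wOn z K = wOn x K) ∧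
            ((∀ i ∉ J, y i = z i) ∧ wOn y J = wOn z J) then
          (wOn x K).factorial * (K.card - wOn x K).factorial *
            ((wOn y J).factorial * (J.card - wOn y J).factorial) else 0 := by
    intro z
    rw [card_permsOn_filter_eq, card_permsOn_filter_eq]
    by_cases h1 : (∀ i ∉ K, z i = x i) ∧ wOn z K = wOn x K
    · by_cases h2 : (∀ i ∉ J, y i = z i) ∧ wOn y J = wOn z J
      · rw [if_pos h1, if_pos h2, if_pos ⟨h1, h2⟩, h2.2]
      · rw [if_neg h2, mul_zero, if_neg (fun hc => h2 hc.2)]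
    · rw [if_neg h1, zero_mul, if_neg (fun hc => h1 hc.1)]
  rw [Finset.sum_congr rfl (fun z _ => hterm z)]
  rw [Finset.sum_ite, Finset.sum_const, Finset.sum_const, smul_zero, add_zero,
    smul_eq_mul]
  congr 1
  rw [← countZ J K x y hout hw]

lemma distTwo_num_zero (J K : Finset (Fin n)) (x y : Fin n → Bool)
    (h : ¬ ((∀ i ∉ J ∪ K, y i = x i) ∧ wOn y (J ∪ K) = wOn x (J ∪ K))) :
    ((permsOn J ×ˢ permsOn K).filter
      (fun p : Equiv.Perm (Fin n) × Equiv.Perm (Fin n) =>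
        permApply p.1 (permApply p.2 x) = y)).card = 0 := by
  rw [Finset.card_eq_zero, Finset.filter_eq_empty_iff]
  rintro ⟨σ, τ⟩ hp hc
  rw [Finset.mem_product] at hp
  have hσ : σ ∈ permsOn (J ∪ K) := permsOn_mono Finset.subset_union_left hp.1
  have hτ : τ ∈ permsOn (J ∪ K) := permsOn_mono Finset.subset_union_right hp.2
  apply h
  constructor
  · intro i hi
    rw [← hc]
    show permApply σ (permApply τ x) i = x i
    rw [permApply_eq_of_not_mem hσ hi, permApply_eq_of_not_mem hτ hi]
  · rw [← hc, wOn_permApply hσ, wOn_permApply hτ]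

lemma factorial_ne_zero' (t : ℕ) : (t.factorial : ℝ) ≠ 0 := by
  exact_mod_cast Nat.factorial_ne_zero t

lemma idOne (a b d e : ℕ) :
    (((a+d).choose a : ℝ) * ((b+e).choose b)) *
      (((a+b).factorial * (d+e).factorial) / ((a+b+d+e).factorial))
    = (((a+b).choose a : ℝ) * ((d+e).choose d)) / ((a+b+d+e).choose (a+d)) := by
  have s1 : a + d - a = d := by omega
  have s2 : b + e - b = e := by omega
  have s3 : a + b - a = b := by omega
  have s4 : d + e - d = e := by omega
  have s5 : a + b + d + e - (a + d) = b + e := by omega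
  rw [Nat.cast_choose ℝ (by omega : a ≤ a + d), s1,
      Nat.cast_choose ℝ (by omega : b ≤ b + e), s2,
      Nat.cast_choose ℝ (by omega : a ≤ a + b), s3,
      Nat.cast_choose ℝ (by omega : d ≤ d + e), s4,
      Nat.cast_choose ℝ (by omega : a + d ≤ a + b + d + e), s5]
  have f1 := factorial_ne_zero'
  field_simp

lemma idTwo (a d p q : ℕ) :
    (((a+d).choose a : ℝ) * ((p+q).choose p)) *
      (((a+p).factorial * (d+q).factorial) / ((a+d+p+q).factorial))
    = (((a+p).choose a : ℝ) * ((d+q).choose d)) / ((a+d+p+q).choose (a+d)) := by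
  have s1 : a + d - a = d := by omega
  have s2 : p + q - p = q := by omega
  have s3 : a + p - a = p := by omega
  have s4 : d + q - d = q := by omega
  have s5 : a + d + p + q - (a + d) = p + q := by omega
  rw [Nat.cast_choose ℝ (by omega : a ≤ a + d), s1,
      Nat.cast_choose ℝ (by omega : p ≤ p + q), s2,
      Nat.cast_choose ℝ (by omega : a ≤ a + p), s3,
      Nat.cast_choose ℝ (by omega : d ≤ d + q), s4,
      Nat.cast_choose ℝ (by omega : a + d ≤ a + d + p + q), s5]
  have f1 := factorial_ne_zero'
  field_simp

lemma keyReal (jo ci k wo m a j c N w : ℕ)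
    (hj : j = jo + ci) (hc : c = k + ci) (hN : N = j + k) (hw : w = wo + m)
    (hm : m ≤ k + ci) (hwo : wo ≤ jo) (hak : a ≤ k) :
    ((if a ≤ w then (k.choose a * j.choose (w - a) : ℕ) else 0) : ℝ) *
      |((w.factorial * (N - w).factorial : ℕ) : ℝ) / ((N.factorial : ℕ) : ℝ) -
        (((if a ≤ m then ci.choose (m - a) else 0) *
            (m.factorial * (c - m).factorial *
              ((w - a).factorial * (j - (w - a)).factorial)) : ℕ) : ℝ) /
          ((j.factorial : ℝ) * (c.factorial : ℝ))|
    = |(w.choose a : ℝ) * (((N - w).choose (k - a) : ℕ) : ℝ) / ((N.choose k : ℕ) : ℝ) -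
        (m.choose a : ℝ) * (((c - m).choose (k - a) : ℕ) : ℝ) / ((c.choose k : ℕ) : ℝ)| := by
  by_cases haw : a ≤ w
  · by_cases hwj : w - a ≤ j
    · -- main case: counts positive
      have E1 : ((k.choose a * j.choose (w - a) : ℕ) : ℝ) *
          (((w.factorial * (N - w).factorial : ℕ) : ℝ) / ((N.factorial : ℕ) : ℝ))
          = (w.choose a : ℝ) * (((N - w).choose (k - a) : ℕ) : ℝ) / ((N.choose k : ℕ) : ℝ) := by
        have h := idOne a (w - a) (k - a) (j - (w - a))
        rw [show a + (w - a) + (k - a) + (j - (w - a)) = N from by omega,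
          show a + (k - a) = k from by omega, show (w - a) + (j - (w - a)) = j from by omega,
          show a + (w - a) = w from by omega,
          show (k - a) + (j - (w - a)) = N - w from by omega] at h
        push_cast
        push_cast at h
        linear_combination h
      by_cases ham : a ≤ m
      · have E2 : ((k.choose a * j.choose (w - a) : ℕ) : ℝ) *
            (((ci.choose (m - a) *
              (m.factorial * (c - m).factorial *
                ((w - a).factorial * (j - (w - a)).factorial)) : ℕ) : ℝ) /
              ((j.factorial : ℝ) * (c.factorial : ℝ)))
            = (m.choose a : ℝ) * (((c - m).choose (k - a) : ℕ) : ℝ) / ((c.choose k : ℕ) : ℝ) := by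
          by_cases hci : m - a ≤ ci
          · have h := idTwo a (k - a) (m - a) (ci - (m - a))
            rw [show a + (k - a) + (m - a) + (ci - (m - a)) = c from by omega,
              show a + (k - a) = k from by omega,
              show (m - a) + (ci - (m - a)) = ci from by omega,
              show a + (m - a) = m from by omega,
              show (k - a) + (ci - (m - a)) = c - m from by omega] at h
            have hjfac : ((j.choose (w - a) : ℝ)) * ((w - a).factorial : ℝ) *
                ((j - (w - a)).factorial : ℝ) = (j.factorial : ℝ) := by
              exact_mod_cast congrArg (Nat.cast : ℕ → ℝ)
                (Nat.choose_mul_factorial_mul_factorial hwj)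
            have hjne := factorial_ne_zero' j
            have hcne := factorial_ne_zero' c
            push_cast at h hjfac ⊢
            rw [← h]
            field_simp
            linear_combination ((k.choose a : ℝ)) * (ci.choose (m - a) : ℝ) * hjfac
          · have h1 : ci.choose (m - a) = 0 := Nat.choose_eq_zero_of_lt (by omega)
            have h2 : (c - m).choose (k - a) = 0 := Nat.choose_eq_zero_of_lt (by omega)
            rw [h1, h2]
            push_cast
            simp
        -- combine
        have hcnt : ((if a ≤ w then (k.choose a * j.choose (w - a) : ℕ) else 0) : ℝ)
            = ((k.choose a * j.choose (w - a) : ℕ) : ℝ) := by rw [if_pos haw]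
        have hd2 : (((if a ≤ m then ci.choose (m - a) else 0) *
            (m.factorial * (c - m).factorial *
              ((w - a).factorial * (j - (w - a)).factorial)) : ℕ) : ℝ)
            = ((ci.choose (m - a) *
              (m.factorial * (c - m).factorial *
                ((w - a).factorial * (j - (w - a)).factorial)) : ℕ) : ℝ) := by rw [if_pos ham]
        rw [hcnt, hd2]
        rw [← abs_of_nonneg (a := ((k.choose a * j.choose (w - a) : ℕ) : ℝ)) (by positivity),
          ← abs_mul, mul_sub, E1]
        rw [mul_div_assoc, E2]
      · -- a > m : second distribution vanishes
        have hd2 : (((if a ≤ m then ci.choose (m - a) else 0) *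
            (m.factorial * (c - m).factorial *
              ((w - a).factorial * (j - (w - a)).factorial)) : ℕ) : ℝ) = 0 := by
          rw [if_neg ham]
          push_cast
          ring
        have hm0 : (m.choose a : ℝ) = 0 := by
          rw [Nat.choose_eq_zero_of_lt (show m < a from by omega)]
          simp
        rw [hd2, hm0, if_pos haw]
        rw [zero_div, sub_zero, zero_mul, zero_div, sub_zero]
        rw [← abs_of_nonneg (a := ((k.choose a * j.choose (w - a) : ℕ) : ℝ)) (by positivity),
          ← abs_mul, E1]
    · -- w - a > j : no vectors, both hypergeometrics vanish
      have hcnt : (k.choose a * j.choose (w - a) : ℕ) = 0 := by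
        rw [Nat.choose_eq_zero_of_lt (show j < w - a from by omega), mul_zero]
      have h1 : (N - w).choose (k - a) = 0 :=
        Nat.choose_eq_zero_of_lt (show N - w < k - a from by omega)
      have h2 : (m.choose a : ℝ) * (((c - m).choose (k - a) : ℕ) : ℝ) = 0 := by
        by_cases ham : a ≤ m
        · rw [Nat.choose_eq_zero_of_lt (show c - m < k - a from by omega)]
          push_cast; ring
        · rw [Nat.choose_eq_zero_of_lt (show m < a from by omega)]
          push_cast; ring
      rw [if_pos haw, hcnt, h1, h2]
      push_cast
      simp
  · -- a > w
    have h1 : (w.choose a : ℝ) = 0 := by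
      rw [Nat.choose_eq_zero_of_lt (show w < a from by omega)]; simp
    have h2 : (m.choose a : ℝ) = 0 := by
      rw [Nat.choose_eq_zero_of_lt (show m < a from by omega)]; simp
    rw [if_neg haw, h1, h2]
    push_cast
    simp


/-- the TV distance between `πx` and `π_J π_K x` equals the TV distance
between the corresponding hypergeometric distributions. -/
theorem tv_perm_eq_tv_hypergeometric (n : ℕ) (J K : Finset (Fin n)) (x : Fin n → Bool) :
    (1 / 2) * ∑ y : Fin n → Bool, |distOne J K x y - distTwo J K x y| =
      (1 / 2) * ∑ i ∈ Finset.range ((K \ J).card + 1),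
        |hypPMF (J ∪ K).card (wOn x (J ∪ K)) (K \ J).card i -
          hypPMF K.card (wOn x K) (K \ J).card i| := by
  have hN : (J ∪ K).card = J.card + (K \ J).card := by
    rw [← Finset.card_union_of_disjoint disjoint_sdiff, Finset.union_sdiff_self_eq_union]
  have hj : J.card = (J \ K).card + (J ∩ K).card := (Finset.card_sdiff_add_card_inter J K).symm
  have hc : K.card = (K \ J).card + (J ∩ K).card := by
    rw [Finset.inter_comm]
    exact (Finset.card_sdiff_add_card_inter K J).symm
  have hwsplit : wOn x (J ∪ K) = wOn x (J \ K) + wOn x K := wOn_splitJK x J K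
  have hm : wOn x K ≤ (K \ J).card + (J ∩ K).card := hc ▸ wOn_le_card
  have hwo : wOn x (J \ K) ≤ (J \ K).card := wOn_le_card
  congr 1
  -- per-point formulas
  have h_d1 : ∀ y : Fin n → Bool, distOne J K x y =
      ((if (∀ i ∉ J ∪ K, y i = x i) ∧ wOn y (J ∪ K) = wOn x (J ∪ K) then
          (wOn x (J ∪ K)).factorial * ((J ∪ K).card - wOn x (J ∪ K)).factorial else 0 : ℕ) : ℝ) /
        (((J ∪ K).card.factorial : ℕ) : ℝ) := by
    intro y
    unfold distOne
    rw [card_permsOn_filter_eq, card_permsOn]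
  have h_d2 : ∀ y : Fin n → Bool, distTwo J K x y =
      ((if (∀ i ∉ J ∪ K, y i = x i) ∧ wOn y (J ∪ K) = wOn x (J ∪ K) then
          (if wOn y (K \ J) ≤ wOn x K then
            (J ∩ K).card.choose (wOn x K - wOn y (K \ J)) else 0) *
          ((wOn x K).factorial * (K.card - wOn x K).factorial *
            ((wOn y J).factorial * (J.card - wOn y J).factorial)) else 0 : ℕ) : ℝ) /
        ((J.card.factorial : ℝ) * (K.card.factorial : ℝ)) := by
    intro y
    unfold distTwo
    rw [card_permsOn, card_permsOn]
    by_cases hcompat : (∀ i ∉ J ∪ K, y i = x i) ∧ wOn y (J ∪ K) = wOn x (J ∪ K)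
    · rw [distTwo_num J K x y hcompat.1 hcompat.2, if_pos hcompat]
    · rw [distTwo_num_zero J K x y hcompat, if_neg hcompat]
  rw [Finset.sum_congr rfl (fun y _ => by rw [h_d1 y, h_d2 y])]
  -- restrict to compatible vectors
  rw [← Finset.sum_subset
      (Finset.filter_subset (fun y : Fin n → Bool =>
        (∀ i ∉ J ∪ K, y i = x i) ∧ wOn y (J ∪ K) = wOn x (J ∪ K)) Finset.univ)
      (by
        intro y _ hy
        have hnc : ¬ ((∀ i ∉ J ∪ K, y i = x i) ∧ wOn y (J ∪ K) = wOn x (J ∪ K)) := by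
          intro hcc
          exact hy (Finset.mem_filter.2 ⟨Finset.mem_univ y, hcc⟩)
        rw [if_neg hnc, if_neg hnc]
        simp)]
  -- fiberwise sum over the weight on K \ J
  rw [← Finset.sum_fiberwise_of_maps_to (g := fun y : Fin n → Bool => wOn y (K \ J))
      (t := Finset.range ((K \ J).card + 1))
      (by
        intro y _
        rw [Finset.mem_range]
        exact Nat.lt_succ_of_le wOn_le_card)]
  apply Finset.sum_congr rfl
  intro a ha
  rw [Finset.mem_range] at ha
  have hak : a ≤ (K \ J).card := by omega
  -- the summand is constant on each fiber
  have hconst : ∀ y ∈ (Finset.univ.filter (fun y : Fin n → Bool =>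
      (∀ i ∉ J ∪ K, y i = x i) ∧ wOn y (J ∪ K) = wOn x (J ∪ K))).filter
      (fun y => wOn y (K \ J) = a),
      |((if (∀ i ∉ J ∪ K, y i = x i) ∧ wOn y (J ∪ K) = wOn x (J ∪ K) then
          (wOn x (J ∪ K)).factorial * ((J ∪ K).card - wOn x (J ∪ K)).factorial else 0 : ℕ) : ℝ) /
        (((J ∪ K).card.factorial : ℕ) : ℝ) -
        ((if (∀ i ∉ J ∪ K, y i = x i) ∧ wOn y (J ∪ K) = wOn x (J ∪ K) then
          (if wOn y (K \ J) ≤ wOn x K then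
            (J ∩ K).card.choose (wOn x K - wOn y (K \ J)) else 0) *
          ((wOn x K).factorial * (K.card - wOn x K).factorial *
            ((wOn y J).factorial * (J.card - wOn y J).factorial)) else 0 : ℕ) : ℝ) /
        ((J.card.factorial : ℝ) * (K.card.factorial : ℝ))|
      = |(((wOn x (J ∪ K)).factorial * ((J ∪ K).card - wOn x (J ∪ K)).factorial : ℕ) : ℝ) /
          (((J ∪ K).card.factorial : ℕ) : ℝ) -
          (((if a ≤ wOn x K then
            (J ∩ K).card.choose (wOn x K - a) else 0) *
          ((wOn x K).factorial * (K.card - wOn x K).factorial *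
            ((wOn x (J ∪ K) - a).factorial *
              (J.card - (wOn x (J ∪ K) - a)).factorial)) : ℕ) : ℝ) /
        ((J.card.factorial : ℝ) * (K.card.factorial : ℝ))| := by
    intro y hy
    rw [Finset.mem_filter, Finset.mem_filter] at hy
    obtain ⟨⟨-, hcomp⟩, hwa⟩ := hy
    have hsum := wOn_split y J K
    have haw : a ≤ wOn x (J ∪ K) := by
      rw [← hcomp.2, ← hwa]
      exact wOn_mono (Finset.sdiff_subset.trans Finset.subset_union_right)
    have hyJ : wOn y J = wOn x (J ∪ K) - a := by omega
    rw [if_pos hcomp, if_pos hcomp, hwa, hyJ]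
  rw [Finset.sum_congr rfl hconst, Finset.sum_const, Finset.filter_filter,
    countY J K x a, nsmul_eq_mul]
  have hkey := keyReal (J \ K).card (J ∩ K).card (K \ J).card (wOn x (J \ K)) (wOn x K) a
    J.card K.card (J ∪ K).card (wOn x (J ∪ K)) hj hc hN hwsplit hm hwo hak
  push_cast at hkey ⊢
  rw [hkey]
  simp [hypPMF]
end
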